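/- arXiv:2007.11490 — 2 statements merged into one kernel-verified Lean document; each statement's English description precedes it below -/
import Mathlib

section
/- Let E be a small exact category and F₁ → F₂ → F₃ a short exact sequence in the functor category Mod E (additive functors E^op → Ab). If F₁ and F₃ are weakly effaceable, then F₂ is weakly effaceable. -/
open CategoryTheory CategoryTheory.Limits Opposite

universe u

/-- A functor `F : Eᵒᵖ ⥤ Ab` is weakly effaceable (with respect to the class `adm` of
admissible epimorphisms of the exact structure on `E`) if for every `X` and every
`x ∈ F(X)` there is an admissible epimorphism `f : Y ⟶ X` with `F(f)(x) = 0`. -/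
def WeaklyEffaceable {E : Type u} [SmallCategory E] [Preadditive E]
    (adm : MorphismProperty E) (F : Eᵒᵖ ⥤ AddCommGrpCat.{u}) : Prop :=
  ∀ (X : E) (x : F.obj (op X)), ∃ (Y : E) (f : Y ⟶ X), adm f ∧ F.map f.op x = 0

/-- Let `E` be a small exact category, with class of admissible epimorphisms `adm`, and let
`F₁ → F₂ → F₃` be a (pointwise) short exact sequence in `Mod E`, the category of additive
functors `Eᵒᵖ ⥤ Ab`. If `F₁` and `F₃` are weakly effaceable, then so is `F₂`. -/
theorem weaklyEffaceable_of_extension {E : Type u} [SmallCategory E] [Preadditive E]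
    (adm : MorphismProperty E) [adm.IsStableUnderComposition]
    (F₁ F₂ F₃ : Eᵒᵖ ⥤ AddCommGrpCat.{u})
    [F₁.Additive] [F₂.Additive] [F₃.Additive]
    (α : F₁ ⟶ F₂) (β : F₂ ⟶ F₃)
    (hinj : ∀ X : Eᵒᵖ, Function.Injective (α.app X))
    (hexact : ∀ X : Eᵒᵖ, Function.Exact (α.app X) (β.app X))
    (hsurj : ∀ X : Eᵒᵖ, Function.Surjective (β.app X))
    (h₁ : WeaklyEffaceable adm F₁) (h₃ : WeaklyEffaceable adm F₃) :
    WeaklyEffaceable adm F₂ := by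
  intro X x
  obtain ⟨Y, f, hf, hf0⟩ := h₃ X (β.app (op X) x)
  have hcomm : β.app (op Y) (F₂.map f.op x) = 0 := by
    have := ConcreteCategory.congr_hom (β.naturality f.op) x
    simp only [comp_apply] at this
    exact this.trans hf0
  obtain ⟨y₁, hy₁⟩ := (hexact (op Y) _).mp hcomm
  obtain ⟨Z, g, hg, hg0⟩ := h₁ Y y₁
  refine ⟨Z, g ≫ f, adm.comp_mem g f hg hf, ?_⟩
  have : F₂.map (g ≫ f).op x = F₂.map g.op (F₂.map f.op x) := by
    rw [op_comp, F₂.map_comp]; rfl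
  rw [this, ← hy₁]
  have := ConcreteCategory.congr_hom (α.naturality g.op) y₁
  simp only [comp_apply] at this
  calc F₂.map g.op (α.app (op Y) y₁) = α.app (op Z) (F₁.map g.op y₁) := this.symm
    _ = 0 := by rw [hg0]; exact map_zero _
end

section
/- Let A be an abelian category with a full subcategory M such that Ext^i_A(M, N) = 0 for all M, N in M and all 1 ≤ i ≤ n−1 (M is n-rigid). Suppose X⁰ → X¹ → ⋯ → X^{n+1} is an exact sequence in A with all terms in M. Then for every object Z of M, the induced sequence 0 → Hom(Z, X⁰) → Hom(Z, X¹) → ⋯ → Hom(Z, Xⁿ) → Hom(Z, X^{n+1}) of abelian groups is exact. -/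
open CategoryTheory CategoryTheory.Limits CategoryTheory.Abelian

universe w v u

namespace HomExactAux

section DC

variable {A : Type u} [Category.{v} A] [Abelian A] [HasExt.{w} A]
  [HasDerivedCategory.{max u v} A]

/-- The single functor into the derived category is `CochainComplex.singleFunctor ⋙ Q`. -/
noncomputable def singleIso :
    DerivedCategory.singleFunctor A 0 ≅ CochainComplex.singleFunctor A 0 ⋙ DerivedCategory.Q where
  hom := (DerivedCategory.singleFunctorsPostcompQIso A).hom.hom 0
  inv := (DerivedCategory.singleFunctorsPostcompQIso A).inv.hom 0
  hom_inv_id :=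
    congrArg (fun f => SingleFunctors.Hom.hom f 0) (DerivedCategory.singleFunctorsPostcompQIso A).hom_inv_id
  inv_hom_id :=
    congrArg (fun f => SingleFunctors.Hom.hom f 0) (DerivedCategory.singleFunctorsPostcompQIso A).inv_hom_id

/-- `singleFunctor ⋙ homologyFunctor ≅ 𝟭`. -/
noncomputable def singleH :
    DerivedCategory.singleFunctor A 0 ⋙ DerivedCategory.homologyFunctor A 0 ≅ 𝟭 A :=
  Functor.isoWhiskerRight singleIso _ ≪≫ Functor.associator _ _ _ ≪≫
    Functor.isoWhiskerLeft _ (DerivedCategory.homologyFunctorFactors A 0) ≪≫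
    HomologicalComplex.homologyFunctorSingleIso A (ComplexShape.up ℤ) 0

/-- Turn an element of `Ext Z W 0` into an actual morphism using the homology functor. -/
noncomputable def extToHom {Z W : A} (x : Ext Z W 0) : Z ⟶ W :=
  singleH.inv.app Z ≫ (DerivedCategory.homologyFunctor A 0).map
    ((ShiftedHom.homEquiv (C := DerivedCategory A) ((0 : ℕ) : ℤ) (by simp)).symm x.hom) ≫
    singleH.hom.app W

lemma extToHom_mk₀ {Z W : A} (g : Z ⟶ W) : extToHom (Ext.mk₀ g) = g := by
  dsimp only [extToHom]
  rw [Ext.mk₀_hom]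
  have h1 : (ShiftedHom.homEquiv (C := DerivedCategory A) ((0 : ℕ) : ℤ) (by simp)).symm
      (ShiftedHom.mk₀ _ (by simp) ((DerivedCategory.singleFunctor A 0).map g)) =
      (DerivedCategory.singleFunctor A 0).map g := by
    apply (ShiftedHom.homEquiv ((0 : ℕ) : ℤ) (by simp)).symm_apply_apply
  rw [h1]
  have h2 := (singleH (A := A)).hom.naturality g
  dsimp at h2
  rw [h2, Iso.inv_hom_id_app_assoc]

lemma extToHom_comp_mk₀ {Z W V : A} (x : Ext Z W 0) (f : W ⟶ V) :
    extToHom (x.comp (Ext.mk₀ f) (add_zero 0)) = extToHom x ≫ f := by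
  dsimp only [extToHom]
  rw [Ext.comp_hom, Ext.mk₀_hom, ShiftedHom.comp_mk₀]
  have h1 : (ShiftedHom.homEquiv (C := DerivedCategory A) ((0 : ℕ) : ℤ) (by simp)).symm
      (x.hom ≫ ((DerivedCategory.singleFunctor A 0).map f)⟦((0 : ℕ) : ℤ)⟧') =
      (ShiftedHom.homEquiv (C := DerivedCategory A) ((0 : ℕ) : ℤ) (by simp)).symm x.hom ≫
        (DerivedCategory.singleFunctor A 0).map f := by
    dsimp [ShiftedHom.homEquiv]
    rw [Category.assoc]
    erw [(shiftFunctorZero' (DerivedCategory A) ((0 : ℕ) : ℤ) (by simp)).hom.naturality]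
    simp
  rw [h1, Functor.map_comp]
  have h2 := (singleH (A := A)).hom.naturality f
  dsimp at h2
  rw [Category.assoc, h2]
  simp

lemma extToHom_fac {Z W V : A} (x : Ext Z W 0) (f : W ⟶ V) (g : Z ⟶ V)
    (h : x.comp (Ext.mk₀ f) (add_zero 0) = Ext.mk₀ g) : extToHom x ≫ f = g := by
  rw [← extToHom_comp_mk₀, h, extToHom_mk₀]

end DC

end HomExactAux

open HomExactAux

/-- Let `A` be an abelian category and `M` a full subcategory (given by a predicate `P`)
which is `n`-rigid: `Ext^i(M, N) = 0` for all `M, N ∈ M` and all `1 ≤ i ≤ n − 1`. If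
`X⁰ → X¹ → ⋯ → X^{n+1}` is an exact sequence in `A` with all terms in `M`, then for every
`Z ∈ M` the induced sequence
`0 → Hom(Z, X⁰) → Hom(Z, X¹) → ⋯ → Hom(Z, Xⁿ) → Hom(Z, X^{n+1})` of abelian groups is
exact. -/
theorem hom_exact_of_n_rigid {A : Type u} [Category.{v} A] [Abelian A] [HasExt.{w} A]
    (P : A → Prop) (n : ℕ)
    (hrigid : ∀ M N : A, P M → P N → ∀ i : ℕ, 1 ≤ i → i ≤ n - 1 →
      ∀ e : Abelian.Ext M N i, e = 0)
    (X : ℕ → A) (d : ∀ i, X i ⟶ X (i + 1))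
    (hcomplex : ∀ i, d i ≫ d (i + 1) = 0)
    (hterms : ∀ i ≤ n + 1, P (X i))
    (hmono : Mono (d 0)) (hepi : Epi (d n))
    (hexact : ∀ i < n, (ShortComplex.mk (d i) (d (i + 1)) (hcomplex i)).Exact) :
    ∀ Z : A, P Z →
      Function.Injective (fun g : Z ⟶ X 0 => g ≫ d 0) ∧
      ∀ i < n, Function.Exact (fun g : Z ⟶ X i => g ≫ d i)
        (fun g : Z ⟶ X (i + 1) => g ≫ d (i + 1)) := by
  letI := HasDerivedCategory.standard A
  -- the corestrictions `X i ⟶ K (i+1) := kernel (d (i+1))`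
  let c : ∀ i, X i ⟶ kernel (d (i + 1)) := fun i => kernel.lift (d (i + 1)) (d i) (hcomplex i)
  have hcι : ∀ i, c i ≫ kernel.ι (d (i + 1)) = d i := fun i => kernel.lift_ι _ _ _
  -- `c i` is epi when `i < n`
  have hcepi : ∀ i < n, Epi (c i) := by
    intro i hi
    exact (ShortComplex.exact_iff_epi_kernel_lift _).1 (hexact i hi)
  -- `c 0` is an isomorphism
  have hc0mono : Mono (c 0) := by
    have : Mono (c 0 ≫ kernel.ι (d 1)) := by rw [hcι 0]; exact hmono
    exact mono_of_mono (c 0) (kernel.ι (d 1))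
  -- the short exact sequences `0 → K i → X i → K (i+1) → 0` for `1 ≤ i < n`
  have hzero : ∀ i, kernel.ι (d i) ≫ c i = 0 := by
    intro i
    have : (kernel.ι (d i) ≫ c i) ≫ kernel.ι (d (i + 1)) = 0 := by
      rw [Category.assoc, hcι i, kernel.condition]
    exact zero_of_comp_mono _ this
  let S : ∀ i, ShortComplex A := fun i => ShortComplex.mk (kernel.ι (d i)) (c i) (hzero i)
  have hSse : ∀ i, 1 ≤ i → i < n → (S i).ShortExact := by
    intro i _ hi
    have hepi : Epi (c i) := hcepi i hi
    refine ⟨?_⟩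
    apply ShortComplex.exact_of_f_is_kernel
    exact KernelFork.IsLimit.ofι _ _
      (fun {W} u hu => kernel.lift (d i) u (by
        have : u ≫ d i = u ≫ c i ≫ kernel.ι (d (i + 1)) := by rw [hcι i]
        rw [this, ← Category.assoc, hu, zero_comp]))
      (fun {W} u hu => kernel.lift_ι _ _ _)
      (fun {W} u hu m hm => by
        apply (cancel_mono (kernel.ι (d i))).1
        rw [hm, kernel.lift_ι])
  intro Z hZ
  -- vanishing of `Ext Z (kernel (d i)) j` by dimension shifting
  have vanish : ∀ i, 1 ≤ i → ∀ j, 1 ≤ j → i + j ≤ n →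
      ∀ e : Ext Z (kernel (d i)) j, e = 0 := by
    intro i
    induction i with
    | zero => intro h; omega
    | succ i ih =>
      intro _ j hj hij e
      by_cases hi : i = 0
      · -- base case: `kernel (d 1) ≅ X 0`
        subst hi
        have h0n : 0 < n := by omega
        have : Epi (c 0) := hcepi 0 h0n
        have : IsIso (c 0) := isIso_of_mono_of_epi (c 0)
        have he' : e.comp (Ext.mk₀ (inv (c 0))) (add_zero j) = 0 := by
          apply hrigid Z (X 0) hZ (hterms 0 (by omega)) j hj (by omega)
        calc e = e.comp (Ext.mk₀ (𝟙 _)) (add_zero j) := (Ext.comp_mk₀_id e).symm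
          _ = (e.comp (Ext.mk₀ (inv (c 0))) (add_zero j)).comp (Ext.mk₀ (c 0)) (add_zero j) := by
              rw [Ext.comp_assoc_of_third_deg_zero, Ext.mk₀_comp_mk₀, IsIso.inv_hom_id]
          _ = 0 := by rw [he', Ext.zero_comp]
      · -- inductive step using the short exact sequence `S i`
        have h1i : 1 ≤ i := by omega
        have hSi := hSse i h1i (by omega)
        have hδ : e.comp hSi.extClass rfl = 0 :=
          ih h1i (j + 1) (by omega) (by omega) _
        obtain ⟨x₂, hx₂⟩ := Ext.covariant_sequence_exact₃ Z hSi e rfl hδ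
        have : x₂ = 0 := hrigid Z (X i) hZ (hterms i (by omega)) j hj (by omega) x₂
        rw [← hx₂, this, Ext.zero_comp]
  constructor
  · intro a b hab
    exact (cancel_mono (d 0)).1 hab
  · intro i hi
    intro g
    constructor
    · -- if `g ≫ d (i+1) = 0` then `g` lifts
      intro hg
      let g' : Z ⟶ kernel (d (i + 1)) := kernel.lift (d (i + 1)) g hg
      have hg' : g' ≫ kernel.ι (d (i + 1)) = g := kernel.lift_ι _ _ _
      by_cases hi0 : i = 0
      · subst hi0
        have : Epi (c 0) := hcepi 0 hi
        have : IsIso (c 0) := isIso_of_mono_of_epi (c 0)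
        refine ⟨g' ≫ inv (c 0), ?_⟩
        dsimp
        rw [← hcι 0, ← Category.assoc, Category.assoc (g') (inv (c 0)) (c 0),
          IsIso.inv_hom_id, Category.comp_id, hg']
      · have h1i : 1 ≤ i := by omega
        have hSi := hSse i h1i hi
        have hδ : (Ext.mk₀ g').comp hSi.extClass rfl = 0 :=
          vanish i h1i 1 le_rfl (by omega) _
        obtain ⟨x₂, hx₂⟩ := Ext.covariant_sequence_exact₃ Z hSi (Ext.mk₀ g') rfl hδ
        refine ⟨extToHom x₂, ?_⟩
        have : extToHom x₂ ≫ c i = g' := extToHom_fac x₂ (c i) g' hx₂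
        dsimp
        rw [← hcι i, ← Category.assoc, this, hg']
    · rintro ⟨x, rfl⟩
      dsimp
      rw [Category.assoc, hcomplex i, comp_zero]
end
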